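/- Let s ∈ (0, sup f) be such that the level set {x : f(x) = s} contains no critical point of f. Then sup_{f̃ ∈ F_η} d_H({x : f(x) ≥ s}, {x : f̃(x) ≥ s}) → 0 as η → 0, where d_H denotes the Hausdorff distance between subsets of ℝ^d; i.e., for every ε > 0 there exists η₀ > 0 such that for all 0 < η ≤ η₀ and all f̃ ∈ F_η, d_H({f ≥ s}, {f̃ ≥ s}) ≤ ε. -/

import Mathlib

set_option maxHeartbeats 1000000


open Metric Set Filter MeasureTheory Topology
open scoped Topology RealInnerProductSpace

abbrev Euc (d : ℕ) := EuclideanSpace ℝ (Fin d)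

/-- The Hessian of `f`, as the derivative of the gradient field. -/
noncomputable def hess {d : ℕ} (f : Euc d → ℝ) (x : Euc d) : Euc d →L[ℝ] Euc d :=
  fderiv ℝ (gradient f) x

/-- The standing assumptions on the density `f`: nonnegative, integrable, vanishing at
infinity, twice differentiable with bounded and uniformly continuous zeroth, first and
second derivatives, and Morse (nonsingular Hessian at every critical point). -/
def IsNiceDensity {d : ℕ} (f : Euc d → ℝ) : Prop :=
  (∀ x, 0 ≤ f x) ∧
  Integrable f volume ∧
  Tendsto f (cocompact (Euc d)) (𝓝 0) ∧
  Differentiable ℝ f ∧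
  Differentiable ℝ (gradient f) ∧
  (∃ M, ∀ x, |f x| ≤ M) ∧
  (∃ M, ∀ x, ‖gradient f x‖ ≤ M) ∧
  (∃ M, ∀ x, ‖hess f x‖ ≤ M) ∧
  UniformContinuous f ∧
  UniformContinuous (gradient f) ∧
  UniformContinuous (hess f) ∧
  (∀ x, gradient f x = 0 → Function.Bijective (hess f x))

/-- `γ` is the gradient ascent curve of `f` starting at `x`, defined on `[0, ∞)`. -/
def IsGradFlow {d : ℕ} (f : Euc d → ℝ) (x : Euc d) (γ : ℝ → Euc d) : Prop :=
  γ 0 = x ∧ ∀ t ∈ Ici (0:ℝ), HasDerivWithinAt γ (gradient f (γ t)) (Ici 0) t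

/-- `ftil` belongs to the perturbation class `F_η` around `f`: it is twice differentiable with
bounded and uniformly continuous zeroth, first and second derivatives, and is uniformly
`η`-close to `f` together with its first and second derivatives. -/
def InPerturbClass {d : ℕ} (f ftil : Euc d → ℝ) (η : ℝ) : Prop :=
  Differentiable ℝ ftil ∧
  Differentiable ℝ (gradient ftil) ∧
  (∃ M, ∀ x, |ftil x| ≤ M) ∧
  (∃ M, ∀ x, ‖gradient ftil x‖ ≤ M) ∧
  (∃ M, ∀ x, ‖hess ftil x‖ ≤ M) ∧
  UniformContinuous ftil ∧
  UniformContinuous (gradient ftil) ∧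
  UniformContinuous (hess ftil) ∧
  (∀ x, |ftil x - f x| ≤ η) ∧
  (∀ x, ‖gradient ftil x - gradient f x‖ ≤ η) ∧
  (∀ x, ‖hess ftil x - hess f x‖ ≤ η)

/-- Climbing lemma: near a noncritical level one can climb by `δ` within distance `ε`. -/
lemma climb {d : ℕ} (f : Euc d → ℝ) (hf : IsNiceDensity f) (s : ℝ) (hs : 0 < s)
    (hnoncrit : ∀ x : Euc d, f x = s → gradient f x ≠ 0)
    (ε : ℝ) (hε : 0 < ε) :
    ∃ δ > (0:ℝ), ∀ x : Euc d, s - δ ≤ f x → ∃ y, dist x y ≤ ε ∧ s + δ ≤ f y := by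
  obtain ⟨-, -, htend, hdiff, hgdiff, -, -, ⟨M, hM⟩, -⟩ := hf
  have hcont : Continuous f := hdiff.continuous
  have hgcont : Continuous (gradient f) := hgdiff.continuous
  -- compactness of K = {f ≥ s/2}
  set K : Set (Euc d) := {x | s / 2 ≤ f x} with hKdef
  have hKcl : IsClosed K := isClosed_le continuous_const hcont
  have hKcpt : IsCompact K := by
    have hev : ∀ᶠ x in cocompact (Euc d), f x < s / 2 :=
      htend.eventually (eventually_lt_nhds (half_pos hs))
    obtain ⟨t, htc, hts⟩ := mem_cocompact.mp hev
    refine htc.of_isClosed_subset hKcl fun x hx => ?_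
    by_contra hxt
    have h2 : f x < s / 2 := hts hxt
    exact absurd hx (by simp only [hKdef, mem_setOf_eq]; linarith)
  -- Lipschitz bound for the gradient
  set M' : ℝ := max M 1 with hM'def
  have hM'pos : (0:ℝ) < M' := lt_of_lt_of_le one_pos (le_max_right _ _)
  have hlip : ∀ a b : Euc d, ‖gradient f a - gradient f b‖ ≤ M' * ‖a - b‖ := by
    intro a b
    have := Convex.norm_image_sub_le_of_norm_fderiv_le
      (f := gradient f) (s := (univ : Set (Euc d))) (C := M')
      (fun x _ => (hgdiff x)) (fun x _ => le_trans (hM x) (le_max_left _ _))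
      convex_univ (mem_univ b) (mem_univ a)
    simpa using this
  -- positive lower bound c₀ for φ on K
  set φ : Euc d → ℝ := fun x => |f x - s| + ‖gradient f x‖ with hφdef
  have hφcont : Continuous φ := ((hcont.sub continuous_const).abs).add hgcont.norm
  by_cases hKne : K.Nonempty
  case neg =>
    refine ⟨s / 4, by linarith, fun x hx => absurd ⟨x, ?_⟩ hKne⟩
    show s / 2 ≤ f x; linarith
  obtain ⟨x₀, hx₀K, hx₀min⟩ := hKcpt.exists_isMinOn hKne hφcont.continuousOn
  set c₀ : ℝ := φ x₀ with hc₀def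
  have hc₀pos : 0 < c₀ := by
    rcases eq_or_ne (f x₀) s with h | h
    · have := hnoncrit x₀ h
      have : 0 < ‖gradient f x₀‖ := norm_pos_iff.2 this
      simp only [hc₀def, hφdef, h, sub_self, abs_zero, zero_add]; exact this
    · have h1 : 0 < |f x₀ - s| := abs_pos.2 (sub_ne_zero.2 h)
      have h2 : 0 ≤ ‖gradient f x₀‖ := norm_nonneg _
      simp only [hc₀def, hφdef]; linarith
  have hφlb : ∀ x ∈ K, c₀ ≤ φ x := fun x hx => hx₀min hx
  -- parameters
  set c : ℝ := c₀ / 2 with hcdef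
  have hcpos : 0 < c := half_pos hc₀pos
  set a : ℝ := min (s / 2) c with hadef
  have hapos : 0 < a := lt_min (half_pos hs) hcpos
  set h : ℝ := min ε (c / (2 * M')) with hhdef
  have hhpos : 0 < h := lt_min hε (div_pos hcpos (by linarith))
  have hhε : h ≤ ε := min_le_left _ _
  have hhM : M' * h ≤ c / 2 := by
    have h1 : h ≤ c / (2 * M') := min_le_right _ _
    calc M' * h ≤ M' * (c / (2 * M')) := by nlinarith
      _ = c / 2 := by field_simp
  set δ : ℝ := min a (c * h / 4) with hδdef
  have hδpos : 0 < δ := lt_min hapos (by positivity)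
  refine ⟨δ, hδpos, fun x hx => ?_⟩
  rcases le_or_gt (s + δ) (f x) with hhi | hhi
  · exact ⟨x, by simp [hε.le], hhi⟩
  -- x is in the band |f x - s| ≤ δ ≤ a
  have hδa : δ ≤ a := min_le_left _ _
  have hδch : δ ≤ c * h / 4 := min_le_right _ _
  have hband : |f x - s| ≤ a := abs_sub_le_iff.2 ⟨by linarith, by linarith⟩
  have hxK : x ∈ K := by
    show s / 2 ≤ f x
    have : a ≤ s / 2 := min_le_left _ _
    linarith
  have hgradlb : c ≤ ‖gradient f x‖ := by
    have h1 : c₀ ≤ |f x - s| + ‖gradient f x‖ := hφlb x hxK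
    have h2 : a ≤ c := min_le_right _ _
    have h3 : |f x - s| ≤ c := le_trans hband h2
    have h4 : c₀ = 2 * c := by rw [hcdef]; ring
    linarith
  have hgx0 : gradient f x ≠ 0 := by
    intro h0; rw [h0, norm_zero] at hgradlb; linarith
  -- the climbing direction
  set u : Euc d := ‖gradient f x‖⁻¹ • gradient f x with hudef
  have hnu : ‖u‖ = 1 := norm_smul_inv_norm hgx0
  set y : Euc d := x + h • u with hydef
  have hdistxy : dist x y = h := by
    rw [dist_eq_norm]
    simp only [hydef]
    rw [show x - (x + h • u) = -(h • u) by abel, norm_neg, norm_smul, hnu,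
      Real.norm_eq_abs, abs_of_pos hhpos, mul_one]
  -- derivative along the segment
  have hderiv : ∀ t : ℝ, HasDerivAt (fun t : ℝ => f (x + t • u))
      ⟪gradient f (x + t • u), u⟫ t := by
    intro t
    have hline : HasDerivAt (fun t : ℝ => x + t • u) u t := by
      simpa using ((hasDerivAt_id t).smul_const u).const_add x
    have hF := ((hdiff (x + t • u)).hasGradientAt).hasFDerivAt
    exact hF.comp_hasDerivAt t hline
  have hderivlb : ∀ t ∈ Icc (0:ℝ) h, c / 2 ≤ ⟪gradient f (x + t • u), u⟫ := by
    intro t ht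
    have h1 : ⟪gradient f x, u⟫ = ‖gradient f x‖ := by
      rw [hudef, real_inner_smul_right, real_inner_self_eq_norm_sq, sq,
        inv_mul_cancel_left₀ (norm_ne_zero_iff.2 hgx0)]
    have h2 : |⟪gradient f (x + t • u) - gradient f x, u⟫| ≤ M' * t := by
      calc |⟪gradient f (x + t • u) - gradient f x, u⟫|
          ≤ ‖gradient f (x + t • u) - gradient f x‖ * ‖u‖ := abs_real_inner_le_norm _ _
        _ = ‖gradient f (x + t • u) - gradient f x‖ := by rw [hnu, mul_one]
        _ ≤ M' * ‖(x + t • u) - x‖ := hlip _ _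
        _ = M' * t := by
            rw [show x + t • u - x = t • u by abel, norm_smul, hnu,
              Real.norm_eq_abs, abs_of_nonneg ht.1, mul_one]
    have h3 : ⟪gradient f (x + t • u), u⟫
        = ⟪gradient f x, u⟫ + ⟪gradient f (x + t • u) - gradient f x, u⟫ := by
      rw [← inner_add_left]
      congr 1; abel
    have h4 : M' * t ≤ c / 2 := le_trans (by nlinarith [ht.2]) hhM
    rw [h3, h1]
    have := abs_le.1 h2
    linarith [hgradlb, this.1]
  -- monotonicity of ψ t = f (x + t • u) - (c/2) * t on [0, h]
  set ψ : ℝ → ℝ := fun t => f (x + t • u) - c / 2 * t with hψdef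
  have hψderiv : ∀ t : ℝ, HasDerivAt ψ (⟪gradient f (x + t • u), u⟫ - c / 2) t := by
    intro t
    exact ((hderiv t).sub ((hasDerivAt_id t).const_mul (c / 2))).congr_deriv (by ring)
  have hmono : MonotoneOn ψ (Icc 0 h) := by
    apply monotoneOn_of_deriv_nonneg (convex_Icc 0 h)
      (fun t _ => ((hψderiv t).differentiableAt).continuousAt.continuousWithinAt)
      (fun t _ => ((hψderiv t).differentiableAt).differentiableWithinAt)
    intro t ht
    rw [interior_Icc] at ht
    rw [(hψderiv t).deriv]
    have := hderivlb t ⟨ht.1.le, ht.2.le⟩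
    linarith
  have hkey : ψ 0 ≤ ψ h := hmono (left_mem_Icc.2 hhpos.le) (right_mem_Icc.2 hhpos.le) hhpos.le
  have hfy : f x + c / 2 * h ≤ f y := by
    simp only [hψdef, hydef] at hkey ⊢
    simp only [zero_smul, add_zero, mul_zero, sub_zero] at hkey
    linarith
  exact ⟨y, hdistxy.le.trans hhε, by nlinarith⟩

/-- For a noncritical level `s ∈ (0, sup f)`, the Hausdorff distance between
the upper level sets `{f ≥ s}` and `{f̃ ≥ s}` tends to zero uniformly over `f̃ ∈ F_η` as
`η → 0`. -/
theorem upper_level_sets_hausdorff_stable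
    {d : ℕ} (hd : 0 < d) (f : Euc d → ℝ) (hf : IsNiceDensity f)
    (s : ℝ) (hs : s ∈ Ioo (0:ℝ) (⨆ x, f x))
    (hnoncrit : ∀ x : Euc d, f x = s → gradient f x ≠ 0) :
    ∀ ε > (0:ℝ), ∃ η₀ > (0:ℝ), ∀ η : ℝ, 0 < η → η ≤ η₀ →
      ∀ ftil : Euc d → ℝ, InPerturbClass f ftil η →
        hausdorffDist {x : Euc d | s ≤ f x} {x : Euc d | s ≤ ftil x} ≤ ε := by
  intro ε hε
  obtain ⟨δ, hδpos, hclimb⟩ := climb f hf s hs.1 hnoncrit ε hε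
  refine ⟨δ, hδpos, fun η hηpos hηδ ftil hmem => ?_⟩
  obtain ⟨-, -, -, -, -, -, -, -, hclose, -⟩ := hmem
  apply Metric.hausdorffDist_le_of_infDist hε.le
  · intro x hx
    have hx' : s ≤ f x := hx
    obtain ⟨y, hxy, hy⟩ := hclimb x (by linarith)
    have hfy : s ≤ ftil y := by
      have := abs_le.1 (hclose y); linarith
    exact le_trans (Metric.infDist_le_dist_of_mem (by exact hfy)) hxy
  · intro x hx
    have hx' : s ≤ ftil x := hx
    have hfx : s - δ ≤ f x := by
      have := abs_le.1 (hclose x); linarith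
    obtain ⟨y, hxy, hy⟩ := hclimb x hfx
    have hfy : s ≤ f y := by linarith
    exact le_trans (Metric.infDist_le_dist_of_mem (by exact hfy)) hxy
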